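/- Let α be a real number and ν a real number satisfying (ν − 1 + 8α)(ν − 9) = 48α². Then the function φ(x) = (ν − 9) cos x − 4α cos 3x satisfies φ″ − 4α sin(2x) φ′ + (ν + 12α cos 2x) φ = 0 on ℝ; equivalently, φ is an eigenfunction of K = −d²/dx² + 4α sin(2x) d/dx − 12α cos 2x with eigenvalue ν. Consequently ψ(x) = φ(x) e^{α cos 2x} satisfies the Whittaker–Hill equation −ψ″ − (16α cos 2x + 2α² cos 4x) ψ = (ν − 2α²) ψ. -/

import Mathlib

private lemma hasDerivAt_cos_const_mul (c x : ℝ) :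
    HasDerivAt (fun y : ℝ => Real.cos (c * y)) (-c * Real.sin (c * x)) x := by
  simpa [mul_comm, Function.comp_def] using
    (Real.hasDerivAt_cos (c * x)).comp x ((hasDerivAt_id x).const_mul c)

private lemma hasDerivAt_sin_const_mul (c x : ℝ) :
    HasDerivAt (fun y : ℝ => Real.sin (c * y)) (c * Real.cos (c * x)) x := by
  simpa [mul_comm, Function.comp_def] using
    (Real.hasDerivAt_sin (c * x)).comp x ((hasDerivAt_id x).const_mul c)

/-- for `s = 4`, if `(ν - 1 + 8α)(ν - 9) = 48α²` then
`φ(x) = (ν - 9) cos x - 4α cos 3x` is an eigenfunction of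
`K = -d²/dx² + 4α sin(2x) d/dx - 12α cos 2x` with eigenvalue `ν`, and consequently
`ψ = φ e^{α cos 2x}` solves the Whittaker–Hill equation with `λ = ν - 2α²`. -/
theorem whittaker_hill_s_four_antiperiodic_eigenfunction
    (α ν : ℝ) (hν : (ν - 1 + 8 * α) * (ν - 9) = 48 * α ^ 2)
    (φ : ℝ → ℝ) (hφ : ∀ x : ℝ, φ x = (ν - 9) * Real.cos x - 4 * α * Real.cos (3 * x))
    (ψ : ℝ → ℝ) (hψ : ∀ x : ℝ, ψ x = φ x * Real.exp (α * Real.cos (2 * x))) :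
    (∀ x : ℝ,
      deriv (deriv φ) x - 4 * α * Real.sin (2 * x) * deriv φ x
        + (ν + 12 * α * Real.cos (2 * x)) * φ x = 0) ∧
    (∀ x : ℝ,
      -deriv (deriv ψ) x
        - (16 * α * Real.cos (2 * x) + 2 * α ^ 2 * Real.cos (4 * x)) * ψ x
      = (ν - 2 * α ^ 2) * ψ x) := by
  have hφf : φ = fun x => (ν - 9) * Real.cos x - 4 * α * Real.cos (3 * x) := funext hφ
  subst hφf
  have hψf : ψ = fun x =>
      ((ν - 9) * Real.cos x - 4 * α * Real.cos (3 * x)) * Real.exp (α * Real.cos (2 * x)) :=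
    funext hψ
  subst hψf
  -- first derivative of φ
  set d1 : ℝ → ℝ := fun x => -((ν - 9) * Real.sin x) + 12 * α * Real.sin (3 * x) with hd1def
  have h1 : ∀ x : ℝ, HasDerivAt
      (fun x => (ν - 9) * Real.cos x - 4 * α * Real.cos (3 * x)) (d1 x) x := by
    intro x
    have := ((Real.hasDerivAt_cos x).const_mul (ν - 9)).sub
      ((hasDerivAt_cos_const_mul 3 x).const_mul (4 * α))
    convert this using 1 <;> try rfl
    simp [hd1def]; ring
  -- second derivative of φ
  set d2 : ℝ → ℝ := fun x => -((ν - 9) * Real.cos x) + 36 * α * Real.cos (3 * x) with hd2def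
  have h2 : ∀ x : ℝ, HasDerivAt d1 (d2 x) x := by
    intro x
    have := (((Real.hasDerivAt_sin x).const_mul (ν - 9)).neg).add
      ((hasDerivAt_sin_const_mul 3 x).const_mul (12 * α))
    convert this using 1 <;> try rfl
    simp [hd2def]; ring
  have hder1 : deriv (fun x => (ν - 9) * Real.cos x - 4 * α * Real.cos (3 * x)) = d1 :=
    funext fun x => (h1 x).deriv
  -- the key trig-polynomial identity
  have eqn : ∀ x : ℝ, d2 x - 4 * α * Real.sin (2 * x) * d1 x
      + (ν + 12 * α * Real.cos (2 * x))
        * ((ν - 9) * Real.cos x - 4 * α * Real.cos (3 * x)) = 0 := by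
    intro x
    simp only [hd1def, hd2def]
    rw [Real.cos_three_mul, Real.sin_three_mul, Real.sin_two_mul, Real.cos_two_mul]
    linear_combination Real.cos x * hν +
      (8 * α * (ν - 9) * Real.cos x - 288 * α ^ 2 * Real.cos x
        + 384 * α ^ 2 * Real.cos x * (Real.sin x ^ 2 + 1 - Real.cos x ^ 2)) * Real.sin_sq x
  constructor
  · intro x
    rw [hder1]
    rw [show deriv d1 x = d2 x from (h2 x).deriv]
    exact eqn x
  · -- derivatives of ψ
    intro x
    have hE : ∀ y : ℝ, HasDerivAt (fun y => Real.exp (α * Real.cos (2 * y)))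
        (-2 * α * Real.sin (2 * y) * Real.exp (α * Real.cos (2 * y))) y := by
      intro y
      have := (Real.hasDerivAt_exp (α * Real.cos (2 * y))).comp y
        ((hasDerivAt_cos_const_mul 2 y).const_mul α)
      convert this using 1 <;> try rfl
      simp [Function.comp]; ring
    set g : ℝ → ℝ := fun y =>
      (d1 y - 2 * α * Real.sin (2 * y)
        * ((ν - 9) * Real.cos y - 4 * α * Real.cos (3 * y)))
        * Real.exp (α * Real.cos (2 * y)) with hgdef
    have hψ1 : ∀ y : ℝ, HasDerivAt (fun y =>
        ((ν - 9) * Real.cos y - 4 * α * Real.cos (3 * y))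
          * Real.exp (α * Real.cos (2 * y))) (g y) y := by
      intro y
      have := (h1 y).mul (hE y)
      convert this using 1 <;> try rfl
      simp [hgdef]; ring
    have hderψ : deriv (fun y =>
        ((ν - 9) * Real.cos y - 4 * α * Real.cos (3 * y))
          * Real.exp (α * Real.cos (2 * y))) = g := funext fun y => (hψ1 y).deriv
    set g2 : ℝ → ℝ := fun y =>
      (d2 y - 4 * α * Real.cos (2 * y)
          * ((ν - 9) * Real.cos y - 4 * α * Real.cos (3 * y))
        - 4 * α * Real.sin (2 * y) * d1 y
        + 4 * α ^ 2 * Real.sin (2 * y) ^ 2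
          * ((ν - 9) * Real.cos y - 4 * α * Real.cos (3 * y)))
        * Real.exp (α * Real.cos (2 * y)) with hg2def
    have hg2 : HasDerivAt g (g2 x) x := by
      have hin : HasDerivAt (fun y => d1 y - 2 * α * Real.sin (2 * y)
          * ((ν - 9) * Real.cos y - 4 * α * Real.cos (3 * y)))
          (d2 x - 2 * α * (2 * Real.cos (2 * x)
              * ((ν - 9) * Real.cos x - 4 * α * Real.cos (3 * x))
            + Real.sin (2 * x) * d1 x)) x := by
        have hfe : (fun y => d1 y - 2 * α * Real.sin (2 * y)
            * ((ν - 9) * Real.cos y - 4 * α * Real.cos (3 * y)))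
            = fun y => d1 y - 2 * α * (Real.sin (2 * y)
            * ((ν - 9) * Real.cos y - 4 * α * Real.cos (3 * y))) := by
          funext y; ring
        rw [hfe]
        exact (h2 x).sub
          ((((hasDerivAt_sin_const_mul 2 x).mul (h1 x)).const_mul (2 * α)))
      have := hin.mul (hE x)
      convert this using 1 <;> try rfl
      simp only [hg2def]
      ring
    rw [hderψ, hg2.deriv]
    have hC4 : Real.cos (4 * x) = 2 * Real.cos (2 * x) ^ 2 - 1 := by
      rw [show (4 : ℝ) * x = 2 * (2 * x) by ring, Real.cos_two_mul]
    have hS2 : Real.sin (2 * x) ^ 2 = 1 - Real.cos (2 * x) ^ 2 := Real.sin_sq (2 * x)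
    have e := eqn x
    simp only [hg2def]
    linear_combination (-(Real.exp (α * Real.cos (2 * x)))) * e
      + (-4 * α ^ 2 * ((ν - 9) * Real.cos x - 4 * α * Real.cos (3 * x))
          * Real.exp (α * Real.cos (2 * x))) * hS2
      + (-2 * α ^ 2 * ((ν - 9) * Real.cos x - 4 * α * Real.cos (3 * x))
          * Real.exp (α * Real.cos (2 * x))) * hC4
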